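/- Let f : ℝ → [−∞, ∞] be a convex function. Then f is infimum-stable (for every sequence of convex functions fₙ : ℝ → [−∞,∞] converging pointwise to f one has inf fₙ → inf f) if and only if either: (i) the effective domain of f has more than one point and f is not monotonic, or (ii) inf_{ℝ} f = −∞. -/

import Mathlib

open Filter Topology

def EKey (f : ℝ → EReal) : Prop :=
  ∀ ⦃x y : ℝ⦄ ⦃t s a b : ℝ⦄, 0 ≤ a → 0 ≤ b → a + b = 1 →
    f x ≤ (t : EReal) → f y ≤ (s : EReal) → f (a*x + b*y) ≤ ((a*t + b*s : ℝ) : EReal)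


theorem ekey_of_convex {f : ℝ → EReal}
    (hf : Convex ℝ {p : ℝ × ℝ | f p.1 ≤ (p.2 : EReal)}) : EKey f := by
  intro x y t s a b ha hb hab hx hy
  have := hf (x := (x, t)) (y := (y, s)) hx hy ha hb hab
  simpa [Prod.smul_mk, Prod.mk_add_mk] using this

theorem convex_of_ekey {f : ℝ → EReal} (hf : EKey f) :
    Convex ℝ {p : ℝ × ℝ | f p.1 ≤ (p.2 : EReal)} := by
  intro p hp q hq a b ha hb hab
  simpa [Prod.smul_mk, Prod.mk_add_mk] using hf ha hb hab hp hq

theorem ekey_mid {f : ℝ → EReal} (hf : EKey f) {u v w : ℝ} (huv : u < v) (hvw : v < w)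
    {t s : ℝ} (ht : f u ≤ (t : EReal)) (hs : f w ≤ (s : EReal)) :
    f v ≤ ((((w-v)/(w-u))*t + ((v-u)/(w-u))*s : ℝ) : EReal) := by
  have huw : u < w := huv.trans hvw
  have h1 : (0:ℝ) < w - u := by linarith
  have key := hf (x := u) (y := w) (t := t) (s := s)
    (a := (w-v)/(w-u)) (b := (v-u)/(w-u))
    (by apply div_nonneg <;> linarith) (by apply div_nonneg <;> linarith)
    (by field_simp; ring) ht hs
  have hv : (w-v)/(w-u)*u + (v-u)/(w-u)*w = v := by field_simp; ring
  rwa [hv] at key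

/-- a real value for f at a point where it's not ⊤, given a uniform real lower bound -/
theorem freal {f : ℝ → EReal} {R : ℝ} (hR : ∀ x, (R : EReal) ≤ f x) {z : ℝ}
    (hz : f z ≠ ⊤) : f z = ((f z).toReal : EReal) ∧ R ≤ (f z).toReal := by
  have hb : f z ≠ ⊥ := by
    intro h; exact absurd (h ▸ hR z) (by simp)
  refine ⟨(EReal.coe_toReal hz hb).symm, ?_⟩
  have := hR z
  rw [(EReal.coe_toReal hz hb).symm] at this
  exact_mod_cast this

theorem local_barrier_right {f : ℝ → EReal} {F : ℕ → ℝ → EReal} {r R t z w : ℝ}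
    (hFk : ∀ n, EKey (F n))
    (hpt : ∀ x, Filter.Tendsto (fun n => F n x) atTop (nhds (f x)))
    (hfk : EKey f)
    (hrR : r < R) (hR : ∀ x, (R : EReal) ≤ f x)
    (htz : t < z) (hzw : z < w) (hfz : f z ≠ ⊤) (hfw : f w ≠ ⊤) :
    ∃ δ > 0, ∀ᶠ n in atTop, ∀ x : ℝ, |x - t| < δ → (r : EReal) ≤ F n x := by
  obtain ⟨hvz, hvzR⟩ := freal hR hfz
  obtain ⟨vz, hvzdef⟩ : ∃ v:ℝ, v = (f z).toReal := ⟨_, rfl⟩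
  rw [← hvzdef] at hvz hvzR
  obtain ⟨W, hW⟩ : ∃ v:ℝ, v = vz + 1 := ⟨_, rfl⟩
  obtain ⟨T, hT⟩ : ∃ v:ℝ, v = max r W := ⟨_, rfl⟩
  have hWT : W ≤ T := hT ▸ le_max_right _ _
  have hrT : r ≤ T := hT ▸ le_max_left _ _
  by_cases hBig : ∃ z', t < z' ∧ z' < z ∧ ((T : ℝ) : EReal) < f z'
  · obtain ⟨z', h1, h2, h3⟩ := hBig
    refine ⟨z' - t, by linarith, ?_⟩
    have e1 : ∀ᶠ n in atTop, ((T:ℝ) : EReal) < F n z' := (hpt z').eventually_const_lt h3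
    have e2 : ∀ᶠ n in atTop, F n z < ((W:ℝ) : EReal) := by
      refine (hpt z).eventually_lt_const ?_
      rw [hvz, hW]; exact_mod_cast (lt_add_one vz)
    filter_upwards [e1, e2] with n h1' h2' x hx
    by_contra hcon
    push_neg at hcon
    have hxz' : x < z' := by
      rcases abs_lt.mp hx with ⟨_, h⟩; linarith
    have hmid := ekey_mid (hFk n) hxz' h2 hcon.le h2'.le
    have hzx : (0:ℝ) < z - x := by linarith
    have ha : (0:ℝ) ≤ (z - z')/(z - x) := by apply div_nonneg <;> linarith
    have hb : (0:ℝ) ≤ (z' - x)/(z - x) := by apply div_nonneg <;> linarith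
    have hab : (z - z')/(z - x) + (z' - x)/(z - x) = 1 := by field_simp; ring
    have harith : (z - z')/(z - x)*r + (z' - x)/(z - x)*W ≤ T := by
      have := add_le_add (mul_le_mul_of_nonneg_left hrT ha)
        (mul_le_mul_of_nonneg_left hWT hb)
      calc (z - z')/(z - x)*r + (z' - x)/(z - x)*W
          ≤ (z - z')/(z - x)*T + (z' - x)/(z - x)*T := this
        _ = T := by rw [← add_mul, hab, one_mul]
    have : F n z' ≤ ((T:ℝ) : EReal) :=
      hmid.trans (by exact_mod_cast harith)
    exact absurd (h1'.trans_le this) (lt_irrefl _)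
  · push_neg at hBig
    obtain ⟨ε, hε⟩ : ∃ v:ℝ, v = (R - r)/8 := ⟨_, rfl⟩
    have hεpos : 0 < ε := by rw [hε]; linarith
    obtain ⟨d0, hd0⟩ : ∃ v:ℝ, v = z - t := ⟨_, rfl⟩
    have hd0pos : 0 < d0 := by rw [hd0]; linarith
    obtain ⟨S, hS⟩ : ∃ v:ℝ, v = (W - R) / (d0/2) := ⟨_, rfl⟩
    have hWR : R + 1 ≤ W := by rw [hW]; linarith
    have hSpos : 0 < S := by
      rw [hS]; apply div_pos <;> linarith
    obtain ⟨η, hη⟩ : ∃ v:ℝ, v = min (d0/4) (ε/S) := ⟨_, rfl⟩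
    have hηpos : 0 < η := by
      rw [hη]; apply lt_min; · linarith
      · exact div_pos hεpos hSpos
    have hηd0 : η ≤ d0/4 := hη ▸ min_le_left _ _
    have hηS : η * S ≤ ε := by
      have h9 : η ≤ ε/S := hη ▸ min_le_right _ _
      calc η * S ≤ (ε/S) * S := mul_le_mul_of_nonneg_right h9 hSpos.le
        _ = ε := by field_simp
    obtain ⟨z1, hz1⟩ : ∃ v:ℝ, v = t + η := ⟨_, rfl⟩
    obtain ⟨z2, hz2⟩ : ∃ v:ℝ, v = t + 2*η := ⟨_, rfl⟩
    have hz12 : z1 < z2 := by rw [hz1, hz2]; linarith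
    have hz2z : z2 < z := by rw [hz2]; linarith [hd0 ▸ hηd0, hd0 ▸ hd0pos]
    have htz1 : t < z1 := by rw [hz1]; linarith
    obtain ⟨hfv1, hv1R⟩ := freal hR (show f z1 ≠ ⊤ by
      intro h; exact absurd (h ▸ hBig z1 htz1 (hz12.trans hz2z)) (by simp))
    obtain ⟨hfv2, hv2R⟩ := freal hR (show f z2 ≠ ⊤ by
      intro h; exact absurd (h ▸ hBig z2 (htz1.trans hz12) hz2z) (by simp))
    obtain ⟨v1, hv1def⟩ : ∃ v:ℝ, v = (f z1).toReal := ⟨_, rfl⟩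
    rw [← hv1def] at hfv1 hv1R
    obtain ⟨v2, hv2def⟩ : ∃ v:ℝ, v = (f z2).toReal := ⟨_, rfl⟩
    rw [← hv2def] at hfv2 hv2R
    -- slope bound: v2 ≤ v1 + ε
    have hmidf := ekey_mid hfk hz12 hz2z (le_of_eq hfv1) (le_of_eq hvz)
    have hcpos : (0:ℝ) < z - z1 := by linarith
    have hmidf' : v2 ≤ (z - z2)/(z - z1)*v1 + (z2 - z1)/(z - z1)*vz := by
      rw [hfv2] at hmidf; exact_mod_cast hmidf
    have hA : v2 * (z - z1) ≤ (z - z2)*v1 + (z2 - z1)*vz := by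
      have heq : (z - z2)/(z - z1)*v1 + (z2 - z1)/(z - z1)*vz
          = ((z - z2)*v1 + (z2 - z1)*vz)/(z - z1) := by ring
      rw [heq, le_div_iff₀ hcpos] at hmidf'
      exact hmidf'
    have hc2 : d0/2 ≤ z - z1 := by
      have h8 : z - z1 = d0 - η := by rw [hz1, hd0]; ring
      rw [h8]; linarith
    have hz2z1 : z2 - z1 = η := by rw [hz1, hz2]; ring
    have hkey : η * (vz - v1) ≤ ε * (z - z1) := by
      have h1 : η*(vz - v1) ≤ η*(W - R) := by
        apply mul_le_mul_of_nonneg_left _ hηpos.le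
        rw [hW]; linarith
      have h2 : η*(W - R) = η*S*(d0/2) := by
        rw [hS]; field_simp
      have h3 : η*S*(d0/2) ≤ ε*(d0/2) := by nlinarith
      have h4 : ε*(d0/2) ≤ ε*(z - z1) := mul_le_mul_of_nonneg_left hc2 hεpos.le
      linarith
    have hv21 : v2 ≤ v1 + ε := by
      have hzz : z - z2 = (z - z1) - η := by linarith
      have hchain : v2 * (z - z1) ≤ (v1 + ε) * (z - z1) := by
        calc v2 * (z - z1) ≤ (z - z2)*v1 + (z2 - z1)*vz := hA
          _ = (z - z1)*v1 + η*(vz - v1) := by rw [hzz, hz2z1]; ring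
          _ ≤ (z - z1)*v1 + ε*(z - z1) := by linarith [hkey]
          _ = (v1 + ε) * (z - z1) := by ring
      exact le_of_mul_le_mul_right hchain hcpos
    -- events
    have e1 : ∀ᶠ n in atTop, ((v1 - ε : ℝ) : EReal) < F n z1 := by
      refine (hpt z1).eventually_const_lt ?_
      rw [hfv1]; exact_mod_cast sub_lt_self v1 hεpos
    have e2 : ∀ᶠ n in atTop, F n z2 < ((v2 + ε : ℝ) : EReal) := by
      refine (hpt z2).eventually_lt_const ?_
      rw [hfv2]; exact_mod_cast lt_add_of_pos_right v2 hεpos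
    refine ⟨η/2, by linarith, ?_⟩
    filter_upwards [e1, e2] with n h1' h2' x hx
    by_contra hcon
    push_neg at hcon
    rcases abs_lt.mp hx with ⟨hxl, hxr⟩
    have hxz1 : x < z1 := by rw [hz1]; linarith
    have hmidF := ekey_mid (hFk n) hxz1 hz12 hcon.le h2'.le
    have hppos : (0:ℝ) < z2 - x := by rw [hz2]; linarith
    have hp52 : z2 - x ≤ 5*η/2 := by rw [hz2]; linarith
    have hAle : (z2 - z1)/(z2 - x)*r + (z1 - x)/(z2 - x)*(v2 + ε) ≤ v1 - ε := by
      have heq : (z2 - z1)/(z2 - x)*r + (z1 - x)/(z2 - x)*(v2 + ε)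
          = ((z2 - z1)*r + (z1 - x)*(v2 + ε))/(z2 - x) := by ring
      rw [heq, div_le_iff₀ hppos]
      have hz1x : z1 - x = (z2 - x) - η := by rw [hz1, hz2]; ring
      have hz1xpos : (0:ℝ) ≤ z1 - x := by rw [hz1]; linarith
      have k1 : (z1 - x)*(v2 + ε) ≤ (z1 - x)*(v1 + 2*ε) :=
        mul_le_mul_of_nonneg_left (by linarith) hz1xpos
      have k2 : (z2 - x)*ε ≤ (5*η/2)*ε := mul_le_mul_of_nonneg_right hp52 hεpos.le
      have k3 : η*(8*ε) ≤ η*(v1 - r) := by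
        apply mul_le_mul_of_nonneg_left _ hηpos.le
        linarith [hε ▸ le_refl ε]
      have e1 : (z2 - z1)*r = η*r := by rw [hz2z1]
      have e2 : (z1 - x)*(v1 + 2*ε) = (z2 - x)*(v1 + 2*ε) - η*(v1 + 2*ε) := by
        rw [hz1x]; ring
      linarith [k1, k2, k3, e1, e2, mul_pos hηpos hεpos]
    have hfin : F n z1 ≤ ((v1 - ε : ℝ) : EReal) :=
      hmidF.trans (by exact_mod_cast hAle)
    exact absurd (h1'.trans_le hfin) (lt_irrefl _)

theorem ekey_neg {f : ℝ → EReal} (hf : EKey f) : EKey (fun x => f (-x)) := by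
  intro x y t s a b ha hb hab hx hy
  have := hf (x := -x) (y := -y) ha hb hab hx hy
  have hpt : a*(-x) + b*(-y) = -(a*x + b*y) := by ring
  rw [hpt] at this
  exact this

theorem local_barrier {f : ℝ → EReal} {F : ℕ → ℝ → EReal} {r R t : ℝ}
    (hFk : ∀ n, EKey (F n))
    (hpt : ∀ x, Filter.Tendsto (fun n => F n x) atTop (nhds (f x)))
    (hfk : EKey f)
    (hrR : r < R) (hR : ∀ x, (R : EReal) ≤ f x)
    (hside : (∃ z w, t < z ∧ z < w ∧ f z ≠ ⊤ ∧ f w ≠ ⊤) ∨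
             (∃ z w, w < z ∧ z < t ∧ f z ≠ ⊤ ∧ f w ≠ ⊤)) :
    ∃ δ > 0, ∀ᶠ n in atTop, ∀ x : ℝ, |x - t| < δ → (r : EReal) ≤ F n x := by
  rcases hside with ⟨z, w, h1, h2, h3, h4⟩ | ⟨z, w, h1, h2, h3, h4⟩
  · exact local_barrier_right hFk hpt hfk hrR hR h1 h2 h3 h4
  · obtain ⟨δ, hδ, hev⟩ := local_barrier_right (f := fun x => f (-x))
      (F := fun n x => F n (-x)) (r := r) (R := R) (t := -t) (z := -z) (w := -w)
      (fun n => ekey_neg (hFk n)) (fun x => hpt (-x)) (ekey_neg hfk) hrR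
      (fun x => hR (-x)) (by linarith) (by linarith) (by simpa using h3)
      (by simpa using h4)
    refine ⟨δ, hδ, hev.mono ?_⟩
    intro n hn x hx
    have := hn (-x) (by rw [show -x - -t = -(x - t) by ring, abs_neg]; exact hx)
    simpa using this

theorem global_barrier_left {f : ℝ → EReal} {F : ℕ → ℝ → EReal} {r a b : ℝ}
    (hFk : ∀ n, EKey (F n))
    (hpt : ∀ x, Filter.Tendsto (fun n => F n x) atTop (nhds (f x)))
    (hab : a < b) (hba : f b < f a) (hra : (r : EReal) < f a) :
    ∀ᶠ n in atTop, ∀ x ≤ a, (r : EReal) ≤ F n x := by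
  have hsup : f b ⊔ (r : EReal) < f a := sup_lt_iff.mpr ⟨hba, hra⟩
  obtain ⟨β, hβ1, hβ2⟩ := EReal.lt_iff_exists_real_btwn.mp hsup
  have hfbβ : f b < (β : EReal) := (le_sup_left).trans_lt hβ1
  have hrβ : r < β := by
    have : ((r:ℝ) : EReal) < (β : EReal) := (le_sup_right).trans_lt hβ1
    exact_mod_cast this
  have e1 : ∀ᶠ n in atTop, ((β:ℝ) : EReal) < F n a := (hpt a).eventually_const_lt hβ2
  have e2 : ∀ᶠ n in atTop, F n b < ((β:ℝ) : EReal) := (hpt b).eventually_lt_const hfbβ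
  filter_upwards [e1, e2] with n h1 h2 x hx
  rcases eq_or_lt_of_le hx with rfl | hlt
  · exact le_of_lt ((by exact_mod_cast hrβ : ((r:ℝ):EReal) < (β : EReal)).trans h1)
  · by_contra hcon
    push_neg at hcon
    have hmid := ekey_mid (hFk n) hlt hab hcon.le h2.le
    have hbx : (0:ℝ) < b - x := by linarith
    have harith : (b - a)/(b - x)*r + (a - x)/(b - x)*β ≤ β := by
      have ha' : (0:ℝ) ≤ (b - a)/(b - x) := by apply div_nonneg <;> linarith
      have hb' : (0:ℝ) ≤ (a - x)/(b - x) := by apply div_nonneg <;> linarith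
      have habs : (b - a)/(b - x) + (a - x)/(b - x) = 1 := by field_simp; ring
      have := add_le_add (mul_le_mul_of_nonneg_left hrβ.le ha')
        (le_refl ((a - x)/(b - x)*β))
      calc (b - a)/(b - x)*r + (a - x)/(b - x)*β
          ≤ (b - a)/(b - x)*β + (a - x)/(b - x)*β := this
        _ = β := by rw [← add_mul, habs, one_mul]
    have : F n a ≤ ((β:ℝ) : EReal) := hmid.trans (by exact_mod_cast harith)
    exact absurd (h1.trans_le this) (lt_irrefl _)

theorem global_barrier_right {f : ℝ → EReal} {F : ℕ → ℝ → EReal} {r c d : ℝ}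
    (hFk : ∀ n, EKey (F n))
    (hpt : ∀ x, Filter.Tendsto (fun n => F n x) atTop (nhds (f x)))
    (hcd : c < d) (hcd' : f c < f d) (hrd : (r : EReal) < f d) :
    ∀ᶠ n in atTop, ∀ x, d ≤ x → (r : EReal) ≤ F n x := by
  have := global_barrier_left (f := fun x => f (-x)) (F := fun n x => F n (-x))
    (r := r) (a := -d) (b := -c) (fun n => ekey_neg (hFk n)) (fun x => hpt (-x))
    (by linarith) (by simpa using hcd') (by simpa using hrd)
  refine this.mono ?_
  intro n hn x hx
  have := hn (-x) (by linarith)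
  simpa using this

theorem lower_eventual {f : ℝ → EReal} {F : ℕ → ℝ → EReal} {r R : ℝ}
    (hFk : ∀ n, EKey (F n))
    (hpt : ∀ x, Filter.Tendsto (fun n => F n x) atTop (nhds (f x)))
    (hfk : EKey f)
    (hrR : r < R) (hR : ∀ x, (R : EReal) ≤ f x)
    (hnt : {x : ℝ | f x ≠ ⊤}.Nontrivial) (hnm : ¬ (Monotone f ∨ Antitone f)) :
    ∀ᶠ n in atTop, ∀ x : ℝ, (r : EReal) ≤ F n x := by
  push_neg at hnm
  obtain ⟨hm, ha⟩ := hnm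
  -- two points of the domain
  obtain ⟨p0, hp0, q0, hq0, hpq0⟩ := hnt
  obtain ⟨P, Q, hPQ, hfP, hfQ⟩ : ∃ P Q : ℝ, P < Q ∧ f P ≠ ⊤ ∧ f Q ≠ ⊤ := by
    rcases lt_or_gt_of_ne hpq0 with h | h
    · exact ⟨p0, q0, h, hp0, hq0⟩
    · exact ⟨q0, p0, h, hq0, hp0⟩
  have hmidtop : ∀ z, P < z → z < Q → f z ≠ ⊤ := by
    intro z h1 h2
    obtain ⟨hvP, _⟩ := freal hR hfP
    obtain ⟨hvQ, _⟩ := freal hR hfQ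
    have := ekey_mid hfk h1 h2 (le_of_eq hvP) (le_of_eq hvQ)
    intro htop
    rw [htop, top_le_iff] at this
    exact EReal.coe_ne_top _ this
  -- non-monotonicity points
  obtain ⟨a, b, hab, hba⟩ : ∃ a b : ℝ, a < b ∧ f b < f a := by
    by_contra hcon
    push_neg at hcon
    exact hm (fun u v huv => by
      rcases eq_or_lt_of_le huv with rfl | h
      · exact le_refl _
      · exact hcon u v h)
  obtain ⟨c, d, hcd, hcd'⟩ : ∃ c d : ℝ, c < d ∧ f c < f d := by
    by_contra hcon
    push_neg at hcon
    exact ha (fun u v huv => by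
      rcases eq_or_lt_of_le huv with rfl | h
      · exact le_refl _
      · exact hcon u v h)
  have hra : (r : EReal) < f a :=
    lt_of_le_of_lt (le_trans (by exact_mod_cast hrR.le) (hR b)) hba
  have hrd : (r : EReal) < f d :=
    lt_of_le_of_lt (le_trans (by exact_mod_cast hrR.le) (hR c)) hcd'
  have EBl := global_barrier_left hFk hpt hab hba hra
  have EBr := global_barrier_right hFk hpt hcd hcd' hrd
  by_cases had : a < d
  · -- compactness on [a, d]
    have hloc : ∀ t : ℝ, ∃ δ, 0 < δ ∧
        ∀ᶠ n in atTop, ∀ x : ℝ, |x - t| < δ → (r : EReal) ≤ F n x := by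
      intro t
      have hside : (∃ z w, t < z ∧ z < w ∧ f z ≠ ⊤ ∧ f w ≠ ⊤) ∨
          (∃ z w, w < z ∧ z < t ∧ f z ≠ ⊤ ∧ f w ≠ ⊤) := by
        rcases lt_or_ge t Q with htQ | hQt
        · rcases lt_or_ge t P with htP | hPt
          · exact Or.inl ⟨P, Q, htP, hPQ, hfP, hfQ⟩
          · refine Or.inl ⟨(t+Q)/2, Q, by linarith, by linarith, ?_, hfQ⟩
            exact hmidtop _ (by linarith) (by linarith)
        · rcases lt_or_ge Q t with hQt' | htQ'
          · exact Or.inr ⟨Q, P, hPQ, hQt', hfQ, hfP⟩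
          · have : t = Q := le_antisymm htQ' hQt
            subst this
            refine Or.inr ⟨(P+t)/2, P, by linarith, by linarith, ?_, hfP⟩
            exact hmidtop _ (by linarith) (by linarith)
      obtain ⟨δ, hδ, hev⟩ := local_barrier hFk hpt hfk hrR hR hside
      exact ⟨δ, hδ, hev⟩
    choose δ hδpos hev using hloc
    have hcover : Set.Icc a d ⊆ ⋃ t : ℝ, Metric.ball t (δ t) := by
      intro t _
      exact Set.mem_iUnion.mpr ⟨t, Metric.mem_ball_self (hδpos t)⟩
    obtain ⟨T, hT⟩ := isCompact_Icc.elim_finite_subcover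
      (fun t : ℝ => Metric.ball t (δ t)) (fun t => Metric.isOpen_ball) hcover
    have eAll : ∀ᶠ n in atTop, ∀ t ∈ T, ∀ x : ℝ, |x - t| < δ t → (r : EReal) ≤ F n x := by
      rw [eventually_all_finset]
      exact fun t _ => hev t
    filter_upwards [EBl, EBr, eAll] with n hL hRt hMid
    intro x
    rcases le_or_gt x a with h | h
    · exact hL x h
    rcases le_or_gt d x with h' | h'
    · exact hRt x h'
    have hx : x ∈ Set.Icc a d := ⟨h.le, h'.le⟩
    obtain ⟨t, ht, hxt⟩ := Set.mem_iUnion₂.mp (hT hx)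
    exact hMid t ht x (by rw [← Real.dist_eq]; exact hxt)
  · filter_upwards [EBl, EBr] with n hL hRt
    intro x
    rcases le_or_gt x a with h | h
    · exact hL x h
    · exact hRt x (by linarith [not_lt.mp had])

theorem ereal_add_coe_le {e : EReal} {c t : ℝ} :
    e + (c : EReal) ≤ (t : EReal) ↔ e ≤ ((t - c : ℝ) : EReal) := by
  induction e using EReal.rec with
  | bot => simp
  | coe v =>
    rw [← EReal.coe_add, EReal.coe_le_coe_iff, EReal.coe_le_coe_iff]
    constructor <;> intro <;> linarith
  | top =>
    rw [EReal.top_add_coe]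
    simp only [top_le_iff]
    constructor <;> intro h <;> exact absurd h (EReal.coe_ne_top _)

theorem mono_counter {f : ℝ → EReal} (hfk : EKey f) (hmono : Monotone f)
    {x₁ : ℝ} (hx₁ : f x₁ ≠ ⊤) (hbot : ∀ x, f x ≠ ⊥) :
    ∃ F : ℕ → ℝ → EReal, (∀ n, EKey (F n)) ∧
      (∀ x, Filter.Tendsto (fun n => F n x) atTop (nhds (f x))) ∧
      (∀ n, (⨅ x : ℝ, F n x) = ⊥) := by
  refine ⟨fun n x => f x + ((x/((n:ℝ)+1) : ℝ) : EReal), ?_, ?_, ?_⟩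
  · intro n x y t s a b ha hb hab hx hy
    have hc : (0:ℝ) < (n:ℝ)+1 := by positivity
    rw [ereal_add_coe_le] at hx hy ⊢
    have key := hfk ha hb hab hx hy
    have heq : a*(t - x/((n:ℝ)+1)) + b*(s - y/((n:ℝ)+1))
        = a*t + b*s - (a*x + b*y)/((n:ℝ)+1) := by
      field_simp
      ring
    rw [heq] at key
    exact key
  · intro x
    by_cases htop : f x = ⊤
    · simp only [htop, EReal.top_add_coe]
      exact tendsto_const_nhds
    · obtain ⟨v, hfr⟩ : ∃ v : ℝ, f x = (v : EReal) :=
        ⟨(f x).toReal, (EReal.coe_toReal htop (hbot x)).symm⟩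
      simp only [hfr]
      have h0 : Filter.Tendsto (fun n : ℕ => 1 / ((n:ℝ) + 1)) atTop (nhds 0) :=
        tendsto_one_div_add_atTop_nhds_zero_nat
      have h1 : Filter.Tendsto (fun n : ℕ => v + x/((n:ℝ)+1)) atTop
          (nhds v) := by
        have := h0.const_mul x
        have h2 : Filter.Tendsto (fun n : ℕ => x/((n:ℝ)+1)) atTop (nhds 0) := by
          simpa [div_eq_mul_inv, one_div, mul_comm] using this
        simpa using tendsto_const_nhds.add h2
      have h3 := EReal.tendsto_coe.mpr h1
      simpa [EReal.coe_add] using h3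
  · intro n
    rw [iInf_eq_bot]
    intro b' hb'
    obtain ⟨M, _, hM2⟩ := EReal.lt_iff_exists_real_btwn.mp hb'
    obtain ⟨w₁, hw₁⟩ : ∃ w : ℝ, f x₁ = (w : EReal) :=
      ⟨(f x₁).toReal, (EReal.coe_toReal hx₁ (hbot x₁)).symm⟩
    have hc : (0:ℝ) < (n:ℝ)+1 := by positivity
    set x := min x₁ (((n:ℝ)+1)*(M - w₁ - 1)) with hx
    have hfx : f x ≤ (w₁ : EReal) := hw₁ ▸ hmono (min_le_left _ _)
    have hdiv : x/((n:ℝ)+1) ≤ M - w₁ - 1 := by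
      rw [div_le_iff₀ hc]
      calc x ≤ ((n:ℝ)+1)*(M - w₁ - 1) := min_le_right _ _
        _ = (M - w₁ - 1) * ((n:ℝ)+1) := by ring
    refine ⟨x, ?_⟩
    show f x + ((x/((n:ℝ)+1) : ℝ) : EReal) < b'
    have hcalc : f x + ((x/((n:ℝ)+1) : ℝ) : EReal) < (M : EReal) := by
      calc f x + ((x/((n:ℝ)+1) : ℝ) : EReal)
          ≤ (w₁ : EReal) + ((x/((n:ℝ)+1) : ℝ) : EReal) := add_le_add hfx le_rfl
        _ = ((w₁ + x/((n:ℝ)+1) : ℝ) : EReal) := by rw [EReal.coe_add]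
        _ < (M : EReal) := by exact_mod_cast (by linarith : w₁ + x/((n:ℝ)+1) < M)
    exact hcalc.trans hM2

theorem top_counter :
    ∃ F : ℕ → ℝ → EReal, (∀ n, EKey (F n)) ∧
      (∀ x : ℝ, Filter.Tendsto (fun n => F n x) atTop (nhds (⊤ : EReal))) ∧
      (∀ n, (⨅ x : ℝ, F n x) = ⊥) := by
  refine ⟨fun n x => (((n:ℝ) - x : ℝ) : EReal), ?_, ?_, ?_⟩
  · intro n x y t s a b ha hb hab hx hy
    rw [EReal.coe_le_coe_iff] at hx hy ⊢
    nlinarith [mul_le_mul_of_nonneg_left hx ha, mul_le_mul_of_nonneg_left hy hb]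
  · intro x
    rw [EReal.tendsto_nhds_top_iff_real]
    intro M
    have h1 : Filter.Tendsto (fun n : ℕ => (n:ℝ) - x) atTop atTop :=
      tendsto_atTop_add_const_right atTop (-x) tendsto_natCast_atTop_atTop
    filter_upwards [h1.eventually_gt_atTop M] with n hn
    exact_mod_cast hn
  · intro n
    rw [iInf_eq_bot]
    intro b' hb'
    obtain ⟨M, _, hM2⟩ := EReal.lt_iff_exists_real_btwn.mp hb'
    refine ⟨(n:ℝ) - (M - 1), lt_trans ?_ hM2⟩
    show ((((n:ℝ) - ((n:ℝ) - (M-1))) : ℝ) : EReal) < ((M:ℝ) : EReal)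
    have h9 : (n:ℝ) - ((n:ℝ) - (M-1)) = M - 1 := by ring
    rw [h9]
    exact_mod_cast (by linarith : M - 1 < M)

theorem singleton_counter {x₀ v : ℝ} :
    ∃ F : ℕ → ℝ → EReal, (∀ n, EKey (F n)) ∧
      (∀ n, F n x₀ = ((v : ℝ) : EReal)) ∧
      (∀ x : ℝ, x ≠ x₀ → Filter.Tendsto (fun n => F n x) atTop (nhds (⊤ : EReal))) ∧
      (∀ n, (⨅ x : ℝ, F n x) = (((v - 1 : ℝ)) : EReal)) := by
  refine ⟨fun n x => ((max (v - ((n:ℝ)+1)*(x-x₀))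
      (v - 1 - ((n:ℝ)+1) + ((n:ℝ)+1)^2*(x-x₀)) : ℝ) : EReal), ?_, ?_, ?_, ?_⟩
  · intro n x y t s a b ha hb hab hx hy
    rw [EReal.coe_le_coe_iff] at hx hy ⊢
    rcases max_le_iff.mp hx with ⟨hx1, hx2⟩
    rcases max_le_iff.mp hy with ⟨hy1, hy2⟩
    have hb1 : b = 1 - a := by linarith
    subst hb1
    have ha2 : (0:ℝ) ≤ 1 - a := hb
    apply max_le
    · linarith [mul_le_mul_of_nonneg_left hx1 ha, mul_le_mul_of_nonneg_left hy1 ha2]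
    · linarith [mul_le_mul_of_nonneg_left hx2 ha, mul_le_mul_of_nonneg_left hy2 ha2]
  · intro n
    have hm : (0:ℝ) < (n:ℝ)+1 := by positivity
    have : max (v - ((n:ℝ)+1)*(x₀-x₀)) (v - 1 - ((n:ℝ)+1) + ((n:ℝ)+1)^2*(x₀-x₀)) = v := by
      rw [max_eq_left] <;> nlinarith
    exact congrArg (fun y : ℝ => (y : EReal)) this
  · intro x hx
    rw [EReal.tendsto_nhds_top_iff_real]
    intro M
    have hm : Filter.Tendsto (fun n : ℕ => (n:ℝ)+1) atTop atTop :=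
      tendsto_atTop_add_const_right atTop 1 tendsto_natCast_atTop_atTop
    rcases lt_or_gt_of_ne hx with hlt | hgt
    · -- x < x₀ : A → ∞
      have hc : (0:ℝ) < x₀ - x := by linarith
      have h1 : Filter.Tendsto (fun n : ℕ => v + ((n:ℝ)+1)*(x₀-x)) atTop atTop :=
        tendsto_atTop_add_const_left atTop v (hm.atTop_mul_const hc)
      filter_upwards [h1.eventually_gt_atTop M] with n hn
      have : (M:ℝ) < max (v - ((n:ℝ)+1)*(x-x₀)) (v - 1 - ((n:ℝ)+1) + ((n:ℝ)+1)^2*(x-x₀)) :=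
        lt_max_of_lt_left (by nlinarith)
      exact_mod_cast this
    · -- x > x₀ : B → ∞
      have hc : (0:ℝ) < x - x₀ := by linarith
      have h2 : Filter.Tendsto (fun n : ℕ => ((n:ℝ)+1)*(x-x₀) - 1) atTop atTop :=
        tendsto_atTop_add_const_right atTop (-1) (hm.atTop_mul_const hc)
      have h1 : Filter.Tendsto (fun n : ℕ => v - 1 + ((n:ℝ)+1)*(((n:ℝ)+1)*(x-x₀) - 1))
          atTop atTop :=
        tendsto_atTop_add_const_left atTop (v-1) (hm.atTop_mul_atTop₀ h2)
      filter_upwards [h1.eventually_gt_atTop M] with n hn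
      have : (M:ℝ) < max (v - ((n:ℝ)+1)*(x-x₀)) (v - 1 - ((n:ℝ)+1) + ((n:ℝ)+1)^2*(x-x₀)) :=
        lt_max_of_lt_right (by nlinarith)
      exact_mod_cast this
  · intro n
    have hm : (0:ℝ) < (n:ℝ)+1 := by positivity
    apply le_antisymm
    · have hval : (fun x : ℝ => ((max (v - ((n:ℝ)+1)*(x-x₀))
          (v - 1 - ((n:ℝ)+1) + ((n:ℝ)+1)^2*(x-x₀)) : ℝ) : EReal)) (x₀ + 1/((n:ℝ)+1))
          = (((v - 1 : ℝ)) : EReal) := by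
        have e1 : v - ((n:ℝ)+1)*((x₀ + 1/((n:ℝ)+1))-x₀) = v - 1 := by
          field_simp
          ring
        have e2 : v - 1 - ((n:ℝ)+1) + ((n:ℝ)+1)^2*((x₀ + 1/((n:ℝ)+1))-x₀) = v - 1 := by
          field_simp
          ring
        simp only [e1, e2, max_self]
      exact hval ▸ iInf_le _ (x₀ + 1/((n:ℝ)+1))
    · apply le_iInf
      intro x
      rw [EReal.coe_le_coe_iff]
      rcases le_or_gt x (x₀ + 1/((n:ℝ)+1)) with h | h
      · apply le_max_of_le_left
        have : ((n:ℝ)+1)*(x - x₀) ≤ 1 := by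
          have := mul_le_mul_of_nonneg_left (by linarith : x - x₀ ≤ 1/((n:ℝ)+1)) hm.le
          calc ((n:ℝ)+1)*(x-x₀) ≤ ((n:ℝ)+1)*(1/((n:ℝ)+1)) := this
            _ = 1 := by field_simp
        linarith
      · apply le_max_of_le_right
        have : ((n:ℝ)+1) ≤ ((n:ℝ)+1)^2*(x - x₀) := by
          have h2 : ((n:ℝ)+1)^2*(1/((n:ℝ)+1)) ≤ ((n:ℝ)+1)^2*(x-x₀) := by
            apply mul_le_mul_of_nonneg_left (by linarith) (by positivity)
          have h3 : ((n:ℝ)+1)^2*(1/((n:ℝ)+1)) = (n:ℝ)+1 := by field_simp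
          linarith
        linarith

/-- Main theorem: a convex `f : ℝ → [−∞,∞]` is infimum-stable iff either
(i) its effective domain has more than one point and `f` is not monotonic,
or (ii) `inf f = −∞`. -/
theorem stmt_8 (f : ℝ → EReal)
    (hf : Convex ℝ {p : ℝ × ℝ | f p.1 ≤ (p.2 : EReal)}) :
    (∀ F : ℕ → ℝ → EReal,
        (∀ n, Convex ℝ {p : ℝ × ℝ | F n p.1 ≤ (p.2 : EReal)}) →
        (∀ x : ℝ, Filter.Tendsto (fun n => F n x) Filter.atTop (nhds (f x))) →
        Filter.Tendsto (fun n => ⨅ x : ℝ, F n x) Filter.atTop (nhds (⨅ x : ℝ, f x)))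
      ↔
    (({x : ℝ | f x ≠ ⊤}.Nontrivial ∧ ¬ (Monotone f ∨ Antitone f)) ∨
      (⨅ x : ℝ, f x) = ⊥) := by
  have hfk := ekey_of_convex hf
  constructor
  · intro hstab
    by_contra hcon
    push_neg at hcon
    obtain ⟨h1, h2⟩ := hcon
    have hbot : ∀ x, f x ≠ ⊥ := by
      intro x hx
      exact h2 (le_bot_iff.mp (hx ▸ iInf_le f x))
    by_cases htopall : ∀ x, f x = ⊤
    · obtain ⟨F, hk, hptF, hinf⟩ := top_counter
      have hthis := hstab F (fun n => convex_of_ekey (hk n))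
        (fun x => by rw [htopall x]; exact hptF x)
      have hL : (⨅ x : ℝ, f x) = ⊤ := by simp [htopall]
      rw [hL] at hthis
      simp only [hinf] at hthis
      have h9 : (⊥ : EReal) = ⊤ := tendsto_nhds_unique tendsto_const_nhds hthis
      exact absurd h9 (by simp)
    · push_neg at htopall
      obtain ⟨x₁, hx₁⟩ := htopall
      by_cases hnt : {x : ℝ | f x ≠ ⊤}.Nontrivial
      · rcases h1 hnt with hmono | hanti
        · obtain ⟨F, hk, hptF, hinf⟩ := mono_counter hfk hmono hx₁ hbot
          have hthis := hstab F (fun n => convex_of_ekey (hk n)) hptF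
          simp only [hinf] at hthis
          exact h2 (tendsto_nhds_unique tendsto_const_nhds hthis).symm
        · have hgmono : Monotone (fun x => f (-x)) := by
            intro u v huv
            exact hanti (by linarith : -v ≤ -u)
          have hgx₁ : (fun x => f (-x)) (-x₁) ≠ ⊤ := by simpa using hx₁
          have hgbot : ∀ x, (fun x => f (-x)) x ≠ ⊥ := fun x => hbot (-x)
          obtain ⟨G, hk, hptG, hinf⟩ := mono_counter (ekey_neg hfk) hgmono hgx₁ hgbot
          have hFk : ∀ n, EKey (fun x => G n (-x)) := fun n => ekey_neg (hk n)
          have hptF : ∀ x, Filter.Tendsto (fun n => G n (-x)) atTop (nhds (f x)) := by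
            intro x
            have := hptG (-x)
            simpa using this
          have hinfF : ∀ n, (⨅ x : ℝ, G n (-x)) = ⊥ := by
            intro n
            rw [le_bot_iff.symm, ← hinf n]
            exact le_iInf fun y => by simpa using iInf_le (fun x => G n (-x)) (-y)
          have hthis := hstab (fun n x => G n (-x)) (fun n => convex_of_ekey (hFk n)) hptF
          simp only [hinfF] at hthis
          exact h2 (tendsto_nhds_unique tendsto_const_nhds hthis).symm
      · have hsub : Set.Subsingleton {x : ℝ | f x ≠ ⊤} := Set.not_nontrivial_iff.mp hnt
        have htop' : ∀ y, y ≠ x₁ → f y = ⊤ := by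
          intro y hy
          by_contra h
          exact hy (hsub h hx₁)
        obtain ⟨v, hv⟩ : ∃ v : ℝ, f x₁ = (v : EReal) :=
          ⟨(f x₁).toReal, (EReal.coe_toReal hx₁ (hbot x₁)).symm⟩
        obtain ⟨F, hk, hval, hptop, hinf⟩ := singleton_counter (x₀ := x₁) (v := v)
        have hptF : ∀ x, Filter.Tendsto (fun n => F n x) atTop (nhds (f x)) := by
          intro x
          by_cases hx : x = x₁
          · subst hx
            rw [hv]
            simp only [hval]
            exact tendsto_const_nhds
          · rw [htop' x hx]
            exact hptop x hx
        have hthis := hstab F (fun n => convex_of_ekey (hk n)) hptF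
        simp only [hinf] at hthis
        have hL : (⨅ x : ℝ, f x) = ((v : ℝ) : EReal) := by
          apply le_antisymm
          · exact hv ▸ iInf_le f x₁
          · apply le_iInf
            intro y
            by_cases hy : y = x₁
            · subst hy; rw [hv]
            · rw [htop' y hy]; exact le_top
        rw [hL] at hthis
        have h9 : ((v - 1 : ℝ) : EReal) = ((v : ℝ) : EReal) :=
          tendsto_nhds_unique tendsto_const_nhds hthis
        have : v - 1 = v := by exact_mod_cast h9
        linarith
  · intro hRHS F hFconv hFpt
    have hFk : ∀ n, EKey (F n) := fun n => ekey_of_convex (hFconv n)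
    rw [tendsto_order]
    constructor
    · intro l hl
      have hbotlt : (⊥ : EReal) < ⨅ x, f x := lt_of_le_of_lt bot_le hl
      rcases hRHS with ⟨hnt, hnm⟩ | hbot'
      · obtain ⟨r, hlr, hrL⟩ := EReal.lt_iff_exists_real_btwn.mp hl
        obtain ⟨R, hrR', hRL⟩ := EReal.lt_iff_exists_real_btwn.mp hrL
        have hrR : r < R := by exact_mod_cast hrR'
        have hR : ∀ x, (R : EReal) ≤ f x := fun x => le_trans hRL.le (iInf_le f x)
        filter_upwards [lower_eventual hFk hFpt hfk hrR hR hnt hnm] with n hn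
        exact lt_of_lt_of_le hlr (le_iInf fun x => hn x)
      · rw [hbot'] at hbotlt
        exact absurd hbotlt (lt_irrefl _)
    · intro u hu
      obtain ⟨x, hx⟩ := iInf_lt_iff.mp hu
      filter_upwards [(hFpt x).eventually_lt_const hx] with n hn
      exact lt_of_le_of_lt (iInf_le _ x) hn
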